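/- arXiv:1711.10652 — 3 statements merged into one kernel-verified Lean document; each statement's English description precedes it below -/
import Mathlib

section
/- For any online algorithm for the secretary problem under the expected capacity constraint of 1, if the algorithm selects only items that are the best seen so far starting from the first location i at which it may select, then the constraint ∑_{j=i}^n 1/j ≤ 1 forces i > n/e (asymptotically), and hence the probability of missing the globally best item is at least 1/e; equivalently the success probability is at most 1 − 1/e. -/
open Finset


lemma log_sum_aux : ∀ n i : ℕ, 1 ≤ i → i ≤ n →
    Real.log ((n + 1 : ℝ) / i) ≤ ∑ j ∈ Finset.Icc i n, (1 : ℝ) / j := by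
  intro n
  induction n with
  | zero => intro i h1 h2; omega
  | succ n ih =>
    intro i h1 h2
    have key : ∀ k : ℕ, 1 ≤ k → Real.log ((k + 1 : ℝ) / k) ≤ 1 / k := by
      intro k hk
      have hk' : (0 : ℝ) < k := by exact_mod_cast hk
      have := Real.log_le_sub_one_of_pos (x := (k + 1 : ℝ) / k) (by positivity)
      calc Real.log ((k + 1 : ℝ) / k) ≤ (k + 1 : ℝ) / k - 1 := this
        _ = 1 / k := by field_simp; ring
    rcases eq_or_lt_of_le h2 with h | h
    · subst h
      rw [Finset.Icc_self, Finset.sum_singleton]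
      have := key (n + 1) (by omega)
      push_cast at this ⊢
      convert this using 2
    · have h2' : i ≤ n := by omega
      rw [Finset.sum_Icc_succ_top (by omega : i ≤ n + 1)]
      have hi : (0 : ℝ) < i := by exact_mod_cast h1
      have hlog : Real.log ((n + 1 + 1 : ℝ) / i)
          = Real.log ((n + 1 : ℝ) / i) + Real.log ((n + 1 + 1 : ℝ) / (n + 1)) := by
        rw [← Real.log_mul (by positivity) (by positivity)]
        congr 1
        field_simp
      have h2 := key (n + 1) (by omega)
      push_cast at h2 ⊢
      rw [hlog]
      have := ih i h1 h2'
      linarith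


/-- Lower bound for the secretary problem under the expected capacity constraint of `1`:
if an algorithm starts selecting records from location `i` onwards, the expected-capacity
constraint `∑_{j=i}^n 1/j ≤ 1` forces `i > n/e`, and (asymptotically) the success
probability `(n - i + 1)/n` of catching the globally best item is at most `1 - 1/e`
(equivalently, the probability of missing it is at least `1/e`). -/
theorem secretary_expected_capacity_lower_bound (ε : ℝ) (hε : 0 < ε) :
    ∃ N : ℕ, ∀ n i : ℕ, N ≤ n → 1 ≤ i → i ≤ n →
      (∑ j ∈ Finset.Icc i n, (1 : ℝ) / j) ≤ 1 →
      (n : ℝ) / Real.exp 1 < i ∧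
      ((n : ℝ) - i + 1) / n ≤ 1 - 1 / Real.exp 1 + ε := by
  refine ⟨⌈1/ε⌉₊ + 1, fun n i hN h1 h2 hsum => ?_⟩
  have hn : (0 : ℝ) < n := by
    have : 1 ≤ n := by omega
    exact_mod_cast Nat.lt_of_lt_of_le Nat.zero_lt_one this
  have hi : (0 : ℝ) < i := by exact_mod_cast h1
  have hlog : Real.log ((n + 1 : ℝ) / i) ≤ 1 := (log_sum_aux n i h1 h2).trans hsum
  have hexp : (n + 1 : ℝ) / i ≤ Real.exp 1 := by
    calc (n + 1 : ℝ) / i = Real.exp (Real.log ((n + 1 : ℝ) / i)) := by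
          rw [Real.exp_log (by positivity)]
      _ ≤ Real.exp 1 := Real.exp_le_exp.2 hlog
  have he : (0 : ℝ) < Real.exp 1 := Real.exp_pos 1
  have hni : (n + 1 : ℝ) ≤ Real.exp 1 * i := by
    rw [div_le_iff₀ hi] at hexp; linarith
  have hfirst : (n : ℝ) / Real.exp 1 < i := by
    rw [div_lt_iff₀ he]; nlinarith
  refine ⟨hfirst, ?_⟩
  have hinv : 1 / (n : ℝ) ≤ ε := by
    rw [div_le_iff₀ hn]
    have h1e : 1 / ε ≤ (⌈1/ε⌉₊ : ℝ) := Nat.le_ceil _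
    have hNn : ((⌈1/ε⌉₊ : ℕ) : ℝ) + 1 ≤ n := by exact_mod_cast hN
    have : 1 / ε ≤ (n : ℝ) := by linarith
    rw [div_le_iff₀ hε] at this
    linarith
  have hi' : (n : ℝ) / Real.exp 1 < i := hfirst
  rw [div_le_iff₀ hn] at hinv ⊢
  have : (n : ℝ) * (1 / Real.exp 1) ≤ i := by
    rw [mul_one_div]; linarith
  nlinarith
end

section
/- If an LP-feasible solution has x(j) < 1 and x(j+1) > 0 for items with b(j) ≤ b(j+1) (i.e., v(j)/w(j) ≥ v(j+1)/w(j+1)), then the modified solution x'(j) = min(1, x(j) + x(j+1)·w(j+1)/w(j)), with x(j+1) decreased correspondingly so total weight is unchanged, has objective value at least as large. -/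
/-- Exchange argument for the fractional knapsack LP: if `x j < 1` and `x (j+1) > 0` for
two items with `b j ≤ b (j+1)` (i.e. `v₂/w₂ ≤ v₁/w₁`), then transferring fractional mass
to item `j` via `x₁' = min 1 (x₁ + x₂ * w₂ / w₁)`, decreasing `x₂` so that the total
weight is unchanged, does not decrease the objective value. -/
theorem fractional_knapsack_exchange (v₁ v₂ w₁ w₂ x₁ x₂ : ℝ)
    (hv₁ : 0 < v₁) (hv₂ : 0 < v₂) (hw₁ : 0 < w₁) (hw₂ : 0 < w₂)
    (hx₁ : 0 ≤ x₁) (hx₁lt : x₁ < 1) (hx₂pos : 0 < x₂) (hx₂le : x₂ ≤ 1)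
    (hb : v₂ / w₂ ≤ v₁ / w₁) :
    w₁ * min 1 (x₁ + x₂ * w₂ / w₁) +
        w₂ * (x₂ - (min 1 (x₁ + x₂ * w₂ / w₁) - x₁) * w₁ / w₂) =
      w₁ * x₁ + w₂ * x₂ ∧
    v₁ * x₁ + v₂ * x₂ ≤
      v₁ * min 1 (x₁ + x₂ * w₂ / w₁) +
        v₂ * (x₂ - (min 1 (x₁ + x₂ * w₂ / w₁) - x₁) * w₁ / w₂) := by
  set m := min 1 (x₁ + x₂ * w₂ / w₁) with hm
  have hd : 0 ≤ m - x₁ := by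
    have h1 : x₁ ≤ 1 := le_of_lt hx₁lt
    have h2 : x₁ ≤ x₁ + x₂ * w₂ / w₁ := le_add_of_nonneg_right (by positivity)
    have := le_min h1 h2
    linarith
  have hvw : v₂ * w₁ ≤ v₁ * w₂ := by
    rw [div_le_div_iff₀ hw₂ hw₁] at hb; linarith
  constructor
  · field_simp
    ring
  · have key : v₂ * ((m - x₁) * w₁ / w₂) ≤ v₁ * (m - x₁) := by
      rw [← mul_div_assoc, div_le_iff₀ hw₂]
      nlinarith
    have h2 : v₂ * (x₂ - (m - x₁) * w₁ / w₂) = v₂ * x₂ - v₂ * ((m - x₁) * w₁ / w₂) := by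
      ring
    nlinarith
end

section
/- Greedy with augmented capacity: suppose all weights satisfy w(i) ≤ 1 and let 1 < C ≤ 2. Order items by non-decreasing buck-per-bang b(i) = w(i)/v(i), and let OFF select the maximal prefix of k items with ∑_{i=1}^k w(i) ≤ C (and ∑_{i=1}^{k+1} w(i) > C if k < n). Then the value of OFF satisfies ∑_{i=1}^k v(i) ≥ (C−1)·v₁(I), where v₁(I) is the optimal fractional knapsack value with capacity 1. -/
open Finset

/-- Greedy with augmented capacity: items (indexed in non-decreasing order of buck-per-bang
`w i / v i`) have values `v i > 0` and weights `0 < w i ≤ 1`; for `1 < C ≤ 2`, if `OFF`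
selects the maximal prefix of `k` items whose total weight is at most `C`, then its value
is at least `(C - 1)` times the optimal fractional knapsack value with capacity `1`. -/
theorem greedy_augmented_capacity (n : ℕ) (v w : Fin n → ℝ)
    (hv : ∀ i, 0 < v i) (hw : ∀ i, 0 < w i) (hw1 : ∀ i, w i ≤ 1)
    (hsort : ∀ i j : Fin n, i ≤ j → w i / v i ≤ w j / v j)
    (C : ℝ) (hC1 : 1 < C) (hC2 : C ≤ 2) (k : ℕ) (hk : k ≤ n)
    (hfit : ∑ i ∈ Finset.univ.filter (fun i : Fin n => (i : ℕ) < k), w i ≤ C)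
    (hmax : k < n → C < ∑ i ∈ Finset.univ.filter (fun i : Fin n => (i : ℕ) < k + 1), w i) :
    (C - 1) *
        sSup {s : ℝ | ∃ x : Fin n → ℝ, (∀ i, 0 ≤ x i ∧ x i ≤ 1) ∧
          (∑ i, w i * x i ≤ 1) ∧ s = ∑ i, v i * x i} ≤
      ∑ i ∈ Finset.univ.filter (fun i : Fin n => (i : ℕ) < k), v i := by
  have hc : (0:ℝ) < C - 1 := by linarith
  set F := Finset.univ.filter (fun i : Fin n => (i : ℕ) < k) with hF
  have hV : 0 ≤ ∑ i ∈ F, v i := Finset.sum_nonneg fun i _ => (hv i).le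
  -- key claim: any fractional solution of capacity C-1 has value at most the prefix value
  have key : ∀ y : Fin n → ℝ, (∀ i, 0 ≤ y i) → (∀ i, y i ≤ 1) →
      (∑ i, w i * y i ≤ C - 1) → ∑ i, v i * y i ≤ ∑ i ∈ F, v i := by
    intro y hy0 hy1 hycap
    rcases eq_or_lt_of_le hk with hkn | hkn
    · have hFu : F = Finset.univ := by
        ext i; simp [hF]; omega
      rw [hFu]
      exact Finset.sum_le_sum fun i _ => by nlinarith [hv i, hy0 i, hy1 i]
    · set m : Fin n := ⟨k, hkn⟩ with hm
      have hr : 0 < v m / w m := div_pos (hv m) (hw m)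
      set r : ℝ := v m / w m with hrdef
      -- prefix weight exceeds C - 1
      have hW : C - 1 < ∑ i ∈ F, w i := by
        have h1 := hmax hkn
        have h2 : Finset.univ.filter (fun i : Fin n => (i : ℕ) < k + 1)
            = insert m F := by
          ext i; simp [hF, Fin.ext_iff, hm]; omega
        have h3 : m ∉ F := by simp [hF, hm]
        rw [h2, Finset.sum_insert h3] at h1
        have := hw1 m
        linarith
      -- comparisons via sortedness
      have hle : ∀ i ∈ F, r * w i ≤ v i := by
        intro i hi
        have him : i ≤ m := by
          simp [hF] at hi
          exact le_of_lt (by simpa [hm, Fin.lt_def] using hi)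
        have := hsort i m him
        rw [div_le_div_iff₀ (hv i) (hv m)] at this
        rw [hrdef, div_mul_eq_mul_div, div_le_iff₀ (hw m)]
        nlinarith
      have hge : ∀ i ∈ Finset.univ.filter (fun i : Fin n => ¬ (i : ℕ) < k),
          v i ≤ r * w i := by
        intro i hi
        have hmi : m ≤ i := by
          simp at hi
          exact (by simpa [hm, Fin.le_def] using hi)
        have := hsort m i hmi
        rw [div_le_div_iff₀ (hv m) (hv i)] at this
        rw [hrdef, div_mul_eq_mul_div, le_div_iff₀ (hw m)]
        nlinarith
      -- split sums
      set G := Finset.univ.filter (fun i : Fin n => ¬ (i : ℕ) < k) with hG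
      have hsplitv : ∑ i, v i * y i = (∑ i ∈ F, v i * y i) + ∑ i ∈ G, v i * y i :=
        (Finset.sum_filter_add_sum_filter_not Finset.univ _ _).symm
      have hsplitw : ∑ i, w i * y i = (∑ i ∈ F, w i * y i) + ∑ i ∈ G, w i * y i :=
        (Finset.sum_filter_add_sum_filter_not Finset.univ _ _).symm
      have hB : ∑ i ∈ G, v i * y i ≤ r * ∑ i ∈ G, w i * y i := by
        rw [Finset.mul_sum]
        exact Finset.sum_le_sum fun i hi => by nlinarith [hge i hi, hy0 i]
      have hA : r * ∑ i ∈ F, w i ≤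
          (∑ i ∈ F, v i) - (∑ i ∈ F, v i * y i) + r * ∑ i ∈ F, w i * y i := by
        rw [Finset.mul_sum, Finset.mul_sum, ← Finset.sum_sub_distrib, ← Finset.sum_add_distrib]
        exact Finset.sum_le_sum fun i hi => by nlinarith [hle i hi, hy0 i, hy1 i]
      have hCc : ∑ i ∈ G, w i * y i ≤ (C - 1) - ∑ i ∈ F, w i * y i := by
        linarith [hsplitw ▸ hycap]
      have h4 : r * ∑ i ∈ G, w i * y i ≤ r * ((C - 1) - ∑ i ∈ F, w i * y i) :=
        mul_le_mul_of_nonneg_left hCc hr.le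
      have h5 : r * (C - 1) ≤ r * ∑ i ∈ F, w i := mul_le_mul_of_nonneg_left hW.le hr.le
      rw [hsplitv]
      nlinarith [hA, hB, h4, h5]
  -- conclude via sSup
  have hsup : sSup {s : ℝ | ∃ x : Fin n → ℝ, (∀ i, 0 ≤ x i ∧ x i ≤ 1) ∧
      (∑ i, w i * x i ≤ 1) ∧ s = ∑ i, v i * x i} ≤ (∑ i ∈ F, v i) / (C - 1) := by
    apply Real.sSup_le
    · rintro s ⟨x, hx, hxcap, rfl⟩
      rw [le_div_iff₀ hc]
      have hy0 : ∀ i, 0 ≤ (C - 1) * x i := fun i =>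
        mul_nonneg hc.le (hx i).1
      have hy1 : ∀ i, (C - 1) * x i ≤ 1 := fun i => by
        nlinarith [(hx i).1, (hx i).2]
      have hycap : ∑ i, w i * ((C - 1) * x i) ≤ C - 1 := by
        have : ∑ i, w i * ((C - 1) * x i) = (C - 1) * ∑ i, w i * x i := by
          rw [Finset.mul_sum]; exact Finset.sum_congr rfl fun i _ => by ring
        rw [this]; nlinarith
      have := key (fun i => (C - 1) * x i) hy0 hy1 hycap
      calc (∑ i, v i * x i) * (C - 1) = ∑ i, v i * ((C - 1) * x i) := by
            rw [Finset.sum_mul]; exact Finset.sum_congr rfl fun i _ => by ring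
        _ ≤ ∑ i ∈ F, v i := this
    · positivity
  calc (C - 1) * sSup _ ≤ (C - 1) * ((∑ i ∈ F, v i) / (C - 1)) :=
        mul_le_mul_of_nonneg_left hsup hc.le
    _ = ∑ i ∈ F, v i := by field_simp
end
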